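/- Let n ≥ 1 and let α⁺, α⁻ : ℝⁿ → ℝⁿ × ℝⁿ be C² maps satisfying the Lagrangian condition ω(∂α⁺/∂uᵢ(u), ∂α⁺/∂uⱼ(u)) = 0 and ω(∂α⁻/∂vᵢ(v), ∂α⁻/∂vⱼ(v)) = 0 for all indices i, j and all points u, v ∈ ℝⁿ. Define x(u,v) = ½(α⁺(u) + α⁻(v)), y(u,v) = ½(α⁺(u) − α⁻(v)), and the functions λᵢ(u,v) = ω(∂x/∂uᵢ(u,v), y(u,v)) and μⱼ(u,v) = ω(∂x/∂vⱼ(u,v), y(u,v)). Then for all (u,v) ∈ ℝⁿ × ℝⁿ and all indices i, j one has ∂λᵢ/∂uⱼ = ∂λⱼ/∂uᵢ, ∂μᵢ/∂vⱼ = ∂μⱼ/∂vᵢ, and ∂λᵢ/∂vⱼ = ∂μⱼ/∂uᵢ; that is, the 1-form Σᵢ λᵢ duᵢ + Σⱼ μⱼ dvⱼ is closed, which is the condition for local existence of a function f with ∂f/∂uᵢ = ω(∂x/∂uᵢ, y) and ∂f/∂vⱼ = ω(∂x/∂vⱼ, y). -/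

import Mathlib

open scoped BigOperators

/-- The canonical symplectic form on `ℝⁿ × ℝⁿ`:
`ω((a,b),(c,d)) = ⟨a,d⟩ − ⟨b,c⟩`. -/
noncomputable def symp (n : ℕ) (a b : (Fin n → ℝ) × (Fin n → ℝ)) : ℝ :=
  (∑ i, a.1 i * b.2 i) - (∑ i, a.2 i * b.1 i)

noncomputable def sympL (n : ℕ) :
    ((Fin n → ℝ) × (Fin n → ℝ)) →L[ℝ] ((Fin n → ℝ) × (Fin n → ℝ)) →L[ℝ] ℝ :=
  LinearMap.toContinuousLinearMap
    { toFun := fun a => LinearMap.toContinuousLinearMap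
        { toFun := fun b => symp n a b
          map_add' := by
            intro b c
            simp [symp, mul_add, Finset.sum_add_distrib]
            ring
          map_smul' := by
            intro r b
            simp [symp, Prod.smul_fst, Prod.smul_snd, Pi.smul_apply, smul_eq_mul,
              Finset.mul_sum, mul_left_comm]
            rw [mul_sub, Finset.mul_sum, Finset.mul_sum] }
      map_add' := by
        intro a b
        apply ContinuousLinearMap.ext
        intro c
        simp [symp, add_mul, Finset.sum_add_distrib]
        ring
      map_smul' := by
        intro r a
        apply ContinuousLinearMap.ext
        intro c
        simp [symp, Prod.smul_fst, Prod.smul_snd, Pi.smul_apply, smul_eq_mul,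
          Finset.mul_sum, mul_assoc]
        rw [mul_sub, Finset.mul_sum, Finset.mul_sum] }

@[simp] lemma sympL_apply (n : ℕ) (a b : (Fin n → ℝ) × (Fin n → ℝ)) :
    sympL n a b = symp n a b := by
  simp [sympL]

lemma symp_smul_left (n : ℕ) (c : ℝ) (a b : (Fin n → ℝ) × (Fin n → ℝ)) :
    symp n (c • a) b = c * symp n a b := by
  simp only [symp, Prod.smul_fst, Prod.smul_snd, Pi.smul_apply, smul_eq_mul, mul_assoc,
    ← Finset.mul_sum, ← mul_sub]

lemma symp_smul_right (n : ℕ) (c : ℝ) (a b : (Fin n → ℝ) × (Fin n → ℝ)) :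
    symp n a (c • b) = c * symp n a b := by
  simp only [symp, Prod.smul_fst, Prod.smul_snd, Pi.smul_apply, smul_eq_mul, mul_left_comm,
    ← Finset.mul_sum, ← mul_sub]

lemma symp_sub_right (n : ℕ) (a b c : (Fin n → ℝ) × (Fin n → ℝ)) :
    symp n a (b - c) = symp n a b - symp n a c := by
  simp [symp, mul_sub, Finset.sum_sub_distrib]
  ring

lemma symp_zero_left (n : ℕ) (b : (Fin n → ℝ) × (Fin n → ℝ)) : symp n 0 b = 0 := by
  simp [symp]

lemma symp_neg_right (n : ℕ) (a b : (Fin n → ℝ) × (Fin n → ℝ)) :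
    symp n a (-b) = - symp n a b := by
  simp [symp]
  ring

lemma symp_anti (n : ℕ) (a b : (Fin n → ℝ) × (Fin n → ℝ)) :
    symp n a b = - symp n b a := by
  simp [symp, mul_comm]

theorem stmt0 (n : ℕ) (hn : 1 ≤ n)
    (αp αm : (Fin n → ℝ) → (Fin n → ℝ) × (Fin n → ℝ))
    (hαp : ContDiff ℝ 2 αp) (hαm : ContDiff ℝ 2 αm)
    (hLp : ∀ (u : Fin n → ℝ) (i j : Fin n),
      symp n (fderiv ℝ αp u (Pi.single i 1)) (fderiv ℝ αp u (Pi.single j 1)) = 0)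
    (hLm : ∀ (v : Fin n → ℝ) (i j : Fin n),
      symp n (fderiv ℝ αm v (Pi.single i 1)) (fderiv ℝ αm v (Pi.single j 1)) = 0)
    (x y : (Fin n → ℝ) × (Fin n → ℝ) → (Fin n → ℝ) × (Fin n → ℝ))
    (hx : ∀ u v, x (u, v) = ((1:ℝ)/2) • (αp u + αm v))
    (hy : ∀ u v, y (u, v) = ((1:ℝ)/2) • (αp u - αm v))
    (lam mu : Fin n → ((Fin n → ℝ) × (Fin n → ℝ)) → ℝ)
    (hlam : ∀ (i : Fin n) (u v : Fin n → ℝ),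
      lam i (u, v) = symp n (fderiv ℝ x (u, v) (Pi.single i 1, 0)) (y (u, v)))
    (hmu : ∀ (j : Fin n) (u v : Fin n → ℝ),
      mu j (u, v) = symp n (fderiv ℝ x (u, v) (0, Pi.single j 1)) (y (u, v))) :
    ∀ (u v : Fin n → ℝ) (i j : Fin n),
      fderiv ℝ (lam i) (u, v) (Pi.single j 1, 0) =
        fderiv ℝ (lam j) (u, v) (Pi.single i 1, 0) ∧
      fderiv ℝ (mu i) (u, v) (0, Pi.single j 1) =
        fderiv ℝ (mu j) (u, v) (0, Pi.single i 1) ∧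
      fderiv ℝ (lam i) (u, v) (0, Pi.single j 1) =
        fderiv ℝ (mu j) (u, v) (Pi.single i 1, 0) := by
  have hdαp : ∀ u, HasFDerivAt αp (fderiv ℝ αp u) u := fun u =>
    ((hαp.differentiable (by norm_num)) u).hasFDerivAt
  have hdαm : ∀ v, HasFDerivAt αm (fderiv ℝ αm v) v := fun v =>
    ((hαm.differentiable (by norm_num)) v).hasFDerivAt
  have hαp1 : ContDiff ℝ 1 (fderiv ℝ αp) := hαp.fderiv_right (by norm_num)
  have hαm1 : ContDiff ℝ 1 (fderiv ℝ αm) := hαm.fderiv_right (by norm_num)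
  have hd2p : ∀ u, HasFDerivAt (fderiv ℝ αp) (fderiv ℝ (fderiv ℝ αp) u) u := fun u =>
    ((hαp1.differentiable one_ne_zero) u).hasFDerivAt
  have hd2m : ∀ v, HasFDerivAt (fderiv ℝ αm) (fderiv ℝ (fderiv ℝ αm) v) v := fun v =>
    ((hαm1.differentiable one_ne_zero) v).hasFDerivAt
  have hsp : ∀ (u : Fin n → ℝ) (a b : Fin n → ℝ),
      fderiv ℝ (fderiv ℝ αp) u a b = fderiv ℝ (fderiv ℝ αp) u b a := fun u =>
    hαp.contDiffAt.isSymmSndFDerivAt (by simp [minSmoothness_of_isRCLikeNormedField])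
  have hsm : ∀ (v : Fin n → ℝ) (a b : Fin n → ℝ),
      fderiv ℝ (fderiv ℝ αm) v a b = fderiv ℝ (fderiv ℝ αm) v b a := fun v =>
    hαm.contDiffAt.isSymmSndFDerivAt (by simp [minSmoothness_of_isRCLikeNormedField])
  -- derivative of x
  have hxd : ∀ p : (Fin n → ℝ) × (Fin n → ℝ),
      HasFDerivAt x (((1:ℝ)/2) •
        ((fderiv ℝ αp p.1).comp (ContinuousLinearMap.fst ℝ (Fin n → ℝ) (Fin n → ℝ)) +
         (fderiv ℝ αm p.2).comp (ContinuousLinearMap.snd ℝ (Fin n → ℝ) (Fin n → ℝ)))) p := by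
    intro p
    have hxeq : x = fun q : (Fin n → ℝ) × (Fin n → ℝ) => ((1:ℝ)/2) • (αp q.1 + αm q.2) :=
      funext fun q => hx q.1 q.2
    rw [hxeq]
    exact (((hdαp p.1).comp p hasFDerivAt_fst).add
      ((hdαm p.2).comp p hasFDerivAt_snd)).const_smul ((1:ℝ)/2)
  have hxDu : ∀ (u v : Fin n → ℝ) (i : Fin n),
      fderiv ℝ x (u, v) (Pi.single i 1, (0 : Fin n → ℝ)) =
        ((1:ℝ)/2) • fderiv ℝ αp u (Pi.single i 1) := by
    intro u v i
    rw [(hxd (u, v)).fderiv]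
    simp
  have hxDv : ∀ (u v : Fin n → ℝ) (j : Fin n),
      fderiv ℝ x (u, v) ((0 : Fin n → ℝ), Pi.single j 1) =
        ((1:ℝ)/2) • fderiv ℝ αm v (Pi.single j 1) := by
    intro u v j
    rw [(hxd (u, v)).fderiv]
    simp
  -- explicit forms
  have hlam' : ∀ i, lam i = fun q : (Fin n → ℝ) × (Fin n → ℝ) =>
      sympL n (((1:ℝ)/2) • fderiv ℝ αp q.1 (Pi.single i 1))
        (((1:ℝ)/2) • (αp q.1 - αm q.2)) := by
    intro i; funext q
    have h1 := hlam i q.1 q.2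
    rw [hxDu q.1 q.2 i, hy q.1 q.2] at h1
    rw [sympL_apply]
    exact h1
  have hmu' : ∀ j, mu j = fun q : (Fin n → ℝ) × (Fin n → ℝ) =>
      sympL n (((1:ℝ)/2) • fderiv ℝ αm q.2 (Pi.single j 1))
        (((1:ℝ)/2) • (αp q.1 - αm q.2)) := by
    intro j; funext q
    have h1 := hmu j q.1 q.2
    rw [hxDv q.1 q.2 j, hy q.1 q.2] at h1
    rw [sympL_apply]
    exact h1
  -- derivative of lam
  have keyL : ∀ (u v : Fin n → ℝ) (i : Fin n) (w : (Fin n → ℝ) × (Fin n → ℝ)),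
      fderiv ℝ (lam i) (u, v) w =
        symp n (((1:ℝ)/2) • fderiv ℝ αp u (Pi.single i 1))
          (((1:ℝ)/2) • (fderiv ℝ αp u w.1 - fderiv ℝ αm v w.2)) +
        symp n (((1:ℝ)/2) • (fderiv ℝ (fderiv ℝ αp) u w.1 (Pi.single i 1)))
          (((1:ℝ)/2) • (αp u - αm v)) := by
    intro u v i w
    have h1 : HasFDerivAt (fun q : (Fin n → ℝ) × (Fin n → ℝ) => fderiv ℝ αp q.1)
        ((fderiv ℝ (fderiv ℝ αp) u).comp (ContinuousLinearMap.fst ℝ (Fin n → ℝ) (Fin n → ℝ)))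
        (u, v) := (hd2p u).comp (u, v) hasFDerivAt_fst
    have h2 := (h1.clm_apply (hasFDerivAt_const (Pi.single i 1) ((u : Fin n → ℝ), v))).const_smul
      ((1:ℝ)/2)
    have h3 := ((sympL n).hasFDerivAt).comp ((u : Fin n → ℝ), v) h2
    have h4 : HasFDerivAt (fun q : (Fin n → ℝ) × (Fin n → ℝ) => ((1:ℝ)/2) • (αp q.1 - αm q.2))
        (((1:ℝ)/2) • ((fderiv ℝ αp u).comp (ContinuousLinearMap.fst ℝ (Fin n → ℝ) (Fin n → ℝ)) -
          (fderiv ℝ αm v).comp (ContinuousLinearMap.snd ℝ (Fin n → ℝ) (Fin n → ℝ)))) (u, v) :=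
      (((hdαp u).comp (u, v) hasFDerivAt_fst).sub
        ((hdαm v).comp (u, v) hasFDerivAt_snd)).const_smul ((1:ℝ)/2)
    have h5 := h3.clm_apply h4
    have h6 : HasFDerivAt (fun q : (Fin n → ℝ) × (Fin n → ℝ) =>
        sympL n (((1:ℝ)/2) • fderiv ℝ αp q.1 (Pi.single i 1))
          (((1:ℝ)/2) • (αp q.1 - αm q.2))) _ (u, v) := h5
    rw [hlam' i, h6.fderiv]
    simp [symp_smul_left, symp_smul_right, symp_sub_right]
    ring
  -- derivative of mu
  have keyM : ∀ (u v : Fin n → ℝ) (j : Fin n) (w : (Fin n → ℝ) × (Fin n → ℝ)),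
      fderiv ℝ (mu j) (u, v) w =
        symp n (((1:ℝ)/2) • fderiv ℝ αm v (Pi.single j 1))
          (((1:ℝ)/2) • (fderiv ℝ αp u w.1 - fderiv ℝ αm v w.2)) +
        symp n (((1:ℝ)/2) • (fderiv ℝ (fderiv ℝ αm) v w.2 (Pi.single j 1)))
          (((1:ℝ)/2) • (αp u - αm v)) := by
    intro u v j w
    have h1 : HasFDerivAt (fun q : (Fin n → ℝ) × (Fin n → ℝ) => fderiv ℝ αm q.2)
        ((fderiv ℝ (fderiv ℝ αm) v).comp (ContinuousLinearMap.snd ℝ (Fin n → ℝ) (Fin n → ℝ)))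
        (u, v) := (hd2m v).comp (u, v) hasFDerivAt_snd
    have h2 := (h1.clm_apply (hasFDerivAt_const (Pi.single j 1) ((u : Fin n → ℝ), v))).const_smul
      ((1:ℝ)/2)
    have h3 := ((sympL n).hasFDerivAt).comp ((u : Fin n → ℝ), v) h2
    have h4 : HasFDerivAt (fun q : (Fin n → ℝ) × (Fin n → ℝ) => ((1:ℝ)/2) • (αp q.1 - αm q.2))
        (((1:ℝ)/2) • ((fderiv ℝ αp u).comp (ContinuousLinearMap.fst ℝ (Fin n → ℝ) (Fin n → ℝ)) -
          (fderiv ℝ αm v).comp (ContinuousLinearMap.snd ℝ (Fin n → ℝ) (Fin n → ℝ)))) (u, v) :=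
      (((hdαp u).comp (u, v) hasFDerivAt_fst).sub
        ((hdαm v).comp (u, v) hasFDerivAt_snd)).const_smul ((1:ℝ)/2)
    have h5 := h3.clm_apply h4
    have h6 : HasFDerivAt (fun q : (Fin n → ℝ) × (Fin n → ℝ) =>
        sympL n (((1:ℝ)/2) • fderiv ℝ αm q.2 (Pi.single j 1))
          (((1:ℝ)/2) • (αp q.1 - αm q.2))) _ (u, v) := h5
    rw [hmu' j, h6.fderiv]
    simp [symp_smul_left, symp_smul_right, symp_sub_right]
    ring
  intro u v i j
  refine ⟨?_, ?_, ?_⟩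
  · rw [keyL u v i (Pi.single j 1, 0), keyL u v j (Pi.single i 1, 0)]
    simp only [map_zero, sub_zero, symp_smul_left, symp_smul_right, hLp, mul_zero, add_zero,
      zero_add]
    rw [hsp u (Pi.single j 1) (Pi.single i 1)]
  · rw [keyM u v i (0, Pi.single j 1), keyM u v j (0, Pi.single i 1)]
    simp only [map_zero, zero_sub, symp_smul_left, symp_smul_right, symp_neg_right, hLm,
      mul_zero, neg_zero, add_zero, zero_add]
    rw [hsm v (Pi.single j 1) (Pi.single i 1)]
  · rw [keyL u v i (0, Pi.single j 1), keyM u v j (Pi.single i 1, 0)]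
    simp only [map_zero, zero_sub, sub_zero, symp_smul_left, symp_smul_right, symp_neg_right,
      symp_zero_left, ContinuousLinearMap.zero_apply, mul_zero, add_zero, zero_add]
    rw [symp_anti n (fderiv ℝ αm v (Pi.single j 1)) (fderiv ℝ αp u (Pi.single i 1))]
    ring
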